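/- If a nonnegative random variable Z has a continuously differentiable, positive, log-concave density f on (0, ∞), then its hazard rate h(z) = f(z) / ∫_z^∞ f(t) dt is increasing on (0, ∞). -/

import Mathlib

open MeasureTheory

/-- Concave functions are "superadditive on crossing pairs": if `a ≤ y`, `a ≤ s`,
`y + s = a + b`, then `g a + g b ≤ g y + g s`. -/
lemma concave_cross {g : ℝ → ℝ} (hg : ConcaveOn ℝ (Set.Ioi 0) g)
    {a b y s : ℝ} (ha : a ∈ Set.Ioi (0:ℝ)) (hb : b ∈ Set.Ioi (0:ℝ))
    (hay : a ≤ y) (has : a ≤ s) (hsum : y + s = a + b) :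
    g a + g b ≤ g y + g s := by
  rcases eq_or_lt_of_le hay with rfl | hay'
  · have : s = b := by linarith
    subst this; linarith
  have hab : a < b := by
    have hyb : y ≤ b := by linarith
    linarith
  have hba : 0 < b - a := by linarith
  set θ : ℝ := (y - a) / (b - a) with hθdef
  have hθ0 : 0 ≤ θ := div_nonneg (by linarith) hba.le
  have hyb : y ≤ b := by linarith
  have hθ1 : θ ≤ 1 := by
    rw [div_le_one hba]; linarith
  have h1 : (1 - θ) • a + θ • b = y := by
    have hkey : θ * (b - a) = y - a := by rw [hθdef]; exact div_mul_cancel₀ _ hba.ne'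
    rw [smul_eq_mul, smul_eq_mul]; linear_combination hkey
  have h2 : θ • a + (1 - θ) • b = s := by
    have hkey : θ * (b - a) = y - a := by rw [hθdef]; exact div_mul_cancel₀ _ hba.ne'
    rw [smul_eq_mul, smul_eq_mul]; linear_combination -hsum - hkey
  have hy := hg.2 ha hb (by linarith : (0:ℝ) ≤ 1 - θ) hθ0 (by ring)
  have hs := hg.2 ha hb hθ0 (by linarith : (0:ℝ) ≤ 1 - θ) (by ring)
  rw [h1] at hy
  rw [h2] at hs
  simp only [smul_eq_mul] at hy hs
  nlinarith

/-- Barlow–Proschan: a continuously differentiable, positive, log-concave density on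
`(0, ∞)` has increasing hazard rate. -/
theorem log_concave_density_increasing_hazard (f : ℝ → ℝ)
    (hdiff : ContDiffOn ℝ 1 f (Set.Ioi 0))
    (hpos : ∀ z ∈ Set.Ioi (0 : ℝ), 0 < f z)
    (hint : IntegrableOn f (Set.Ioi 0))
    (hsurv : ∀ z ∈ Set.Ioi (0 : ℝ), 0 < ∫ t in Set.Ioi z, f t)
    (hlc : ConcaveOn ℝ (Set.Ioi 0) (fun z => Real.log (f z))) :
    MonotoneOn (fun z => f z / ∫ t in Set.Ioi z, f t) (Set.Ioi 0) := by
  intro x hx y hy hxy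
  have hx0 : (0:ℝ) < x := hx
  have hy0 : (0:ℝ) < y := hy
  have hfx := hpos x hx
  have hfy := hpos y hy
  have hHx := hsurv x hx
  have hHy := hsurv y hy
  simp only
  rw [div_le_div_iff₀ hHx hHy]
  set c := y - x with hc
  have hc0 : 0 ≤ c := by simp [hc]; linarith
  -- change of variables: ∫ t in Ioi y, f t = ∫ s in Ioi x, f (s + c)
  have hmp : MeasurePreserving (fun s : ℝ => s + c) volume volume :=
    measurePreserving_add_right volume c
  have hemb : MeasurableEmbedding (fun s : ℝ => s + c) :=
    (Homeomorph.addRight c).measurableEmbedding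
  have hpre : (fun s : ℝ => s + c) ⁻¹' Set.Ioi y = Set.Ioi x := by
    ext s; simp [hc]
  have hchg : (∫ t in Set.Ioi y, f t) = ∫ s in Set.Ioi x, f (s + c) := by
    rw [← hmp.setIntegral_preimage_emb hemb f (Set.Ioi y), hpre]
  -- integrability
  have hint_y : IntegrableOn f (Set.Ioi y) := hint.mono_set (Set.Ioi_subset_Ioi hy0.le)
  have hint_x : IntegrableOn f (Set.Ioi x) := hint.mono_set (Set.Ioi_subset_Ioi hx0.le)
  have hint_shift : IntegrableOn (fun s => f (s + c)) (Set.Ioi x) := by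
    have := (hmp.restrict_preimage_emb hemb (Set.Ioi y)).integrable_comp_emb hemb
      (g := f)
    rw [hpre] at this
    exact this.mpr hint_y
  -- pointwise inequality on Ioi x : f x * f (s + c) ≤ f y * f s
  have hpt : ∀ s ∈ Set.Ioi x, f x * f (s + c) ≤ f y * f s := by
    intro s hs
    have hs0 : (0:ℝ) < s := lt_trans hx0 hs
    have hsc0 : (0:ℝ) < s + c := by simp [hc]; linarith [(Set.mem_Ioi.mp hs).le]
    have hfs := hpos s (by exact hs0)
    have hfsc := hpos (s + c) (by exact hsc0)
    have key : Real.log (f x) + Real.log (f (s + c)) ≤ Real.log (f y) + Real.log (f s) :=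
      concave_cross hlc hx hsc0 hxy hs.le (by simp [hc]; ring)
    have := Real.exp_le_exp.mpr key
    rwa [Real.exp_add, Real.exp_add, Real.exp_log hfx, Real.exp_log hfsc,
      Real.exp_log hfy, Real.exp_log hfs] at this
  calc f x * ∫ t in Set.Ioi y, f t
      = ∫ s in Set.Ioi x, f x * f (s + c) := by
        rw [hchg, ← integral_const_mul]
    _ ≤ ∫ s in Set.Ioi x, f y * f s := by
        apply setIntegral_mono_on (hint_shift.const_mul _) (hint_x.const_mul _)
          measurableSet_Ioi hpt
    _ = f y * ∫ t in Set.Ioi x, f t := by rw [← integral_const_mul]
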